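/- Define a sequence by m₁ ≥ 32 and m_t = 2^(m_{t−1}/2^{t−1}) for t ≥ 2, and let log* denote the binary iterated logarithm. Then for all odd t ≥ 3, log*(m_{t−1}) ≥ (t−3)/2 + log*(m₂). -/

import Mathlib

open Real

/-- The binary iterated logarithm. -/
noncomputable def logStar (x : ℝ) : ℕ := sInf {n : ℕ | (Real.logb 2)^[n] x ≤ 1}

private lemma two_mul_le_two_pow (d : ℕ) (hd : 1 ≤ d) : 2 * d ≤ 2 ^ d := by
  have h := Nat.lt_two_pow_self (n := d - 1)
  have : d ≤ 2 ^ (d - 1) := by omega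
  calc 2 * d ≤ 2 * 2 ^ (d - 1) := by omega
    _ = 2 ^ (d - 1 + 1) := by ring
    _ = 2 ^ d := by congr 1; omega

/-- Key analytic inequality: `2^k * y ≤ 2^y` for `y ≥ 2k + 10`. -/
private lemma key (y : ℝ) (k : ℕ) (hy : 2 * (k : ℝ) + 10 ≤ y) :
    (2 : ℝ) ^ k * y ≤ (2 : ℝ) ^ y := by
  have hy0 : (0 : ℝ) ≤ y := by
    have : (0:ℝ) ≤ (k:ℝ) := Nat.cast_nonneg k
    linarith
  set n : ℕ := ⌊y⌋₊ with hn
  have hfl : (n : ℝ) ≤ y := Nat.floor_le hy0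
  have hfl2 : y < n + 1 := Nat.lt_floor_add_one y
  have hkn : 2 * k + 10 ≤ n := by
    have : ((2 * k + 10 : ℕ) : ℝ) ≤ y := by push_cast; linarith
    exact Nat.le_floor this
  have hnat : 2 ^ k * (n + 1) ≤ 2 ^ n := by
    have h1 : n + 1 ≤ 2 * (n - k) := by omega
    have h2 : 2 * (n - k) ≤ 2 ^ (n - k) := two_mul_le_two_pow _ (by omega)
    calc 2 ^ k * (n + 1) ≤ 2 ^ k * 2 ^ (n - k) := by
          exact Nat.mul_le_mul_left _ (by omega)
      _ = 2 ^ (k + (n - k)) := (pow_add 2 k (n - k)).symm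
      _ = 2 ^ n := by congr 1; omega
  have hreal : ((2 : ℝ) ^ k * (n + 1) : ℝ) ≤ (2 : ℝ) ^ (n : ℕ) := by
    exact_mod_cast hnat
  have hrpow : ((2 : ℝ) ^ (n : ℕ) : ℝ) ≤ (2 : ℝ) ^ y := by
    rw [← Real.rpow_natCast 2 n]
    exact Real.rpow_le_rpow_of_exponent_le one_le_two hfl
  have hpk : (0 : ℝ) < 2 ^ k := by positivity
  nlinarith [hfl2, hreal, hrpow]

private lemma exists_iter_aux :
    ∀ k : ℕ, ∀ y : ℝ, 0 ≤ y → y ≤ 2 ^ k → ∃ n, (Real.logb 2)^[n] y ≤ 1 := by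
  intro k
  induction k with
  | zero => intro y _ h; exact ⟨0, by simpa using h⟩
  | succ k ih =>
    intro y hy0 hy
    rcases le_or_gt y 1 with h | h
    · exact ⟨0, h⟩
    · have h1 : Real.logb 2 y ≤ (k + 1 : ℝ) := by
        calc Real.logb 2 y ≤ Real.logb 2 (2 ^ (k + 1)) :=
              Real.logb_le_logb_of_le one_lt_two (by linarith) hy
          _ = (k + 1 : ℝ) := by
              rw [Real.logb_pow, Real.logb_self_eq_one one_lt_two]
              push_cast; ring
      have h2 : (k + 1 : ℝ) ≤ (2 : ℝ) ^ k := by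
        exact_mod_cast Nat.lt_two_pow_self (n := k)
      have h0 : 0 ≤ Real.logb 2 y := Real.logb_nonneg one_lt_two h.le
      obtain ⟨n, hn⟩ := ih (Real.logb 2 y) h0 (h1.trans h2)
      exact ⟨n + 1, by rwa [Function.iterate_succ_apply]⟩

private lemma exists_iter (y : ℝ) : ∃ n, (Real.logb 2)^[n] y ≤ 1 := by
  rcases le_or_gt y 1 with h | h
  · exact ⟨0, h⟩
  · obtain ⟨k, hk⟩ := pow_unbounded_of_one_lt y (one_lt_two (α := ℝ))
    exact exists_iter_aux k y (by linarith) hk.le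

private lemma logStar_mono {x y : ℝ} (hx : 1 ≤ x) (hxy : x ≤ y) : logStar x ≤ logStar y := by
  have claim : ∀ n, (∃ j ≤ n, (Real.logb 2)^[j] x ≤ 1) ∨
      (1 < (Real.logb 2)^[n] x ∧ (Real.logb 2)^[n] x ≤ (Real.logb 2)^[n] y) := by
    intro n
    induction n with
    | zero =>
      rcases le_or_gt x 1 with h | h
      · exact Or.inl ⟨0, le_refl 0, h⟩
      · exact Or.inr ⟨h, hxy⟩
    | succ n ih =>
      rcases ih with ⟨j, hj, hle⟩ | ⟨h1, h2⟩
      · exact Or.inl ⟨j, hj.trans (Nat.le_succ n), hle⟩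
      · have hlog : Real.logb 2 ((Real.logb 2)^[n] x) ≤ Real.logb 2 ((Real.logb 2)^[n] y) :=
          Real.logb_le_logb_of_le one_lt_two (by linarith) h2
        rcases le_or_gt (Real.logb 2 ((Real.logb 2)^[n] x)) 1 with h | h
        · exact Or.inl ⟨n + 1, le_refl _, by rwa [Function.iterate_succ_apply']⟩
        · refine Or.inr ⟨by rwa [Function.iterate_succ_apply'], ?_⟩
          rw [Function.iterate_succ_apply', Function.iterate_succ_apply']
          exact hlog
  obtain ⟨N, hN⟩ := exists_iter y
  have hne : {n : ℕ | (Real.logb 2)^[n] y ≤ 1}.Nonempty := ⟨N, hN⟩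
  have hmem : (Real.logb 2)^[sInf {n : ℕ | (Real.logb 2)^[n] y ≤ 1}] y ≤ 1 := Nat.sInf_mem hne
  rcases claim (sInf {n : ℕ | (Real.logb 2)^[n] y ≤ 1}) with ⟨j, hj, hle⟩ | ⟨h1, h2⟩
  · exact (Nat.sInf_le hle).trans hj
  · linarith

private lemma logStar_succ {x : ℝ} (hx : 1 < x) :
    logStar x = logStar (Real.logb 2 x) + 1 := by
  obtain ⟨N, hN⟩ := exists_iter (Real.logb 2 x)
  have hne : {n : ℕ | (Real.logb 2)^[n] (Real.logb 2 x) ≤ 1}.Nonempty := ⟨N, hN⟩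
  have hk : (Real.logb 2)^[logStar (Real.logb 2 x)] (Real.logb 2 x) ≤ 1 := Nat.sInf_mem hne
  have hmem1 : (Real.logb 2)^[logStar (Real.logb 2 x) + 1] x ≤ 1 := by
    rw [Function.iterate_succ_apply]; exact hk
  have h1 : logStar x ≤ logStar (Real.logb 2 x) + 1 := Nat.sInf_le hmem1
  have hne2 : {n : ℕ | (Real.logb 2)^[n] x ≤ 1}.Nonempty := ⟨_, hmem1⟩
  have hm : (Real.logb 2)^[logStar x] x ≤ 1 := Nat.sInf_mem hne2
  have h0 : logStar x ≠ 0 := by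
    intro h
    rw [show logStar x = sInf {n : ℕ | (Real.logb 2)^[n] x ≤ 1} from rfl] at h
    have := hm
    rw [show logStar x = sInf {n : ℕ | (Real.logb 2)^[n] x ≤ 1} from rfl, h] at this
    simp only [Function.iterate_zero, id_eq] at this
    linarith
  obtain ⟨j, hj⟩ : ∃ j, logStar x = j + 1 := ⟨logStar x - 1, by omega⟩
  have hjm : (Real.logb 2)^[j] (Real.logb 2 x) ≤ 1 := by
    have := hm
    rw [hj, Function.iterate_succ_apply] at this
    exact this
  have h2 : logStar (Real.logb 2 x) ≤ j := Nat.sInf_le hjm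
  omega

private lemma logStar_two_rpow {c : ℝ} (hc : 0 < c) :
    logStar ((2 : ℝ) ^ c) = logStar c + 1 := by
  have h1 : (1 : ℝ) < (2 : ℝ) ^ c :=
    (Real.one_lt_rpow_iff_of_pos (by norm_num)).mpr (Or.inl ⟨one_lt_two, hc⟩)
  rw [logStar_succ h1, Real.logb_rpow (by norm_num) (by norm_num)]

private lemma nat_aux (t : ℕ) : 4 * t + 12 ≤ 2 ^ (2 * t + 5) := by
  have h1 : t < 2 ^ t := Nat.lt_two_pow_self (n := t)
  have h2 : 1 ≤ 2 ^ t := Nat.one_le_two_pow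
  have h3 : 2 ^ (2 * t + 5) = 32 * 2 ^ t * 2 ^ t := by
    rw [show 2 * t + 5 = 5 + t + t from by omega, pow_add, pow_add]
    norm_num
  nlinarith

private lemma invariant (m : ℕ → ℝ) (hm1 : 32 ≤ m 1)
    (hrec : ∀ t : ℕ, 2 ≤ t → m t = (2 : ℝ) ^ (m (t - 1) / (2 : ℝ) ^ (t - 1))) :
    ∀ t : ℕ, 2 ≤ t → (2 : ℝ) ^ (3 * t + 5) ≤ m t ∧ (2 : ℝ) ^ t * m (t - 1) ≤ m t := by
  intro t ht
  induction t, ht using Nat.le_induction with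
  | base =>
    have hm2 : m 2 = (2 : ℝ) ^ (m 1 / 2) := by
      have := hrec 2 (le_refl 2)
      norm_num at this
      exact this
    have hy : (16 : ℝ) ≤ m 1 / 2 := by linarith
    constructor
    · rw [hm2]
      calc (2 : ℝ) ^ (3 * 2 + 5) = (2 : ℝ) ^ ((11 : ℕ) : ℝ) := by
            rw [Real.rpow_natCast]
        _ ≤ (2 : ℝ) ^ (m 1 / 2) := by
            apply Real.rpow_le_rpow_of_exponent_le one_le_two
            push_cast; linarith
    · rw [hm2]
      have hk := key (m 1 / 2) 3 (by push_cast; linarith)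
      calc (2 : ℝ) ^ 2 * m (2 - 1) = (2 : ℝ) ^ 3 * (m 1 / 2) := by norm_num; ring
        _ ≤ (2 : ℝ) ^ (m 1 / 2) := hk
  | succ t ht ih =>
    obtain ⟨hinv1, _⟩ := ih
    have hpt : (0 : ℝ) < (2 : ℝ) ^ t := by positivity
    set y : ℝ := m t / (2 : ℝ) ^ t with hy_def
    have hmt : m t = (2 : ℝ) ^ t * y := by rw [hy_def]; field_simp
    have hmt1 : m (t + 1) = (2 : ℝ) ^ y := by
      have := hrec (t + 1) (by omega)
      simpa using this
    have hy1 : (2 : ℝ) ^ (2 * t + 5) ≤ y := by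
      rw [hy_def, le_div_iff₀ hpt, ← pow_add]
      calc (2 : ℝ) ^ (2 * t + 5 + t) = (2 : ℝ) ^ (3 * t + 5) := by ring_nf
        _ ≤ m t := hinv1
    have hy2 : (4 * (t : ℝ) + 12) ≤ y := by
      refine le_trans ?_ hy1
      exact_mod_cast (by exact_mod_cast nat_aux t : ((4 * t + 12 : ℕ) : ℝ) ≤ ((2 : ℝ) ^ (2 * t + 5)))
    constructor
    · rw [hmt1]
      calc (2 : ℝ) ^ (3 * (t + 1) + 5) = (2 : ℝ) ^ (((3 * t + 8 : ℕ) : ℝ)) := by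
            rw [Real.rpow_natCast]; ring_nf
        _ ≤ (2 : ℝ) ^ y := by
            apply Real.rpow_le_rpow_of_exponent_le one_le_two
            push_cast; linarith
    · rw [hmt1]
      have hk := key y (2 * t + 1) (by push_cast; linarith)
      calc (2 : ℝ) ^ (t + 1) * m (t + 1 - 1) = (2 : ℝ) ^ (2 * t + 1) * y := by
            simp only [Nat.add_sub_cancel]
            rw [hmt, ← mul_assoc, ← pow_add, show t + 1 + t = 2 * t + 1 from by omega]
        _ ≤ (2 : ℝ) ^ y := hk

/-- if `m 1 ≥ 32` and `m t = 2 ^ (m (t-1) / 2 ^ (t-1))` for `t ≥ 2`, then for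
all odd `t ≥ 3`, `log*(m (t-1)) ≥ (t-3)/2 + log*(m 2)`. -/
theorem stmt_11 (m : ℕ → ℝ) (hm1 : 32 ≤ m 1)
    (hrec : ∀ t : ℕ, 2 ≤ t → m t = (2 : ℝ) ^ (m (t - 1) / (2 : ℝ) ^ (t - 1))) :
    ∀ t : ℕ, 3 ≤ t → Odd t → (t - 3) / 2 + logStar (m 2) ≤ logStar (m (t - 1)) := by
  have hpos : ∀ s : ℕ, 2 ≤ s → 0 < m s := by
    intro s hs
    rw [hrec s hs]
    exact Real.rpow_pos_of_pos two_pos _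
  have hC : ∀ t : ℕ, 3 ≤ t → (2 : ℝ) ^ (m (t - 1)) ≤ m (t + 1) := by
    intro t ht
    have h := (invariant m hm1 hrec t (by omega)).2
    have hpt : (0 : ℝ) < (2 : ℝ) ^ t := by positivity
    have hmt1 : m (t + 1) = (2 : ℝ) ^ (m t / (2 : ℝ) ^ t) := by
      simpa using hrec (t + 1) (by omega)
    rw [hmt1]
    apply Real.rpow_le_rpow_of_exponent_le one_le_two
    rw [le_div_iff₀ hpt, mul_comm]
    exact h
  have main : ∀ s : ℕ,
      (2 * s + 3 - 3) / 2 + logStar (m 2) ≤ logStar (m (2 * s + 3 - 1)) := by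
    intro s
    induction s with
    | zero => norm_num
    | succ s ih =>
      have hc := hC (2 * s + 3) (by omega)
      have hp : 0 < m (2 * s + 3 - 1) := hpos _ (by omega)
      have h1 : (1 : ℝ) < (2 : ℝ) ^ (m (2 * s + 3 - 1)) :=
        (Real.one_lt_rpow_iff_of_pos (by norm_num)).mpr (Or.inl ⟨one_lt_two, hp⟩)
      have hmono : logStar ((2 : ℝ) ^ (m (2 * s + 3 - 1))) ≤ logStar (m (2 * s + 3 + 1)) :=
        logStar_mono h1.le hc
      rw [logStar_two_rpow hp] at hmono
      have hidx : 2 * (s + 1) + 3 - 1 = 2 * s + 3 + 1 := by omega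
      rw [hidx]
      omega
  intro t ht hodd
  obtain ⟨r, hr⟩ := hodd
  have := main (r - 1)
  have hidx : 2 * (r - 1) + 3 = t := by omega
  rw [hidx] at this
  exact this
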